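/- Let (X,C,R) be a chemical reaction network whose graph of complexes is the chain with vertex set C = {1,…,c} and arc set R = {(i, i−1) : 2 ≤ i ≤ c} ∪ {(i, i+1) : 2 ≤ i ≤ c−1}, and whose deficiency satisfies δ = 1. Let h ∈ ℝ^c be a fixed vector with 0 ≠ h ∈ ker B ∩ ran I_κ and ∑_{i=2}^c h_i ≤ 0. Then E^κ_+ ≠ ∅ for all κ : R → ℝ_{>0} if and only if ∑_{i=2}^c h_i < 0 and ∑_{i=j}^c h_i ≤ 0 for all j ∈ {3,…,c}. -/

import Mathlib

open Finset

/-- The matrix `I_κ ∈ ℝ^{c×c}` with `(I_κ)_{ji} = κ_{ij}` for `j ≠ i` and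
`(I_κ)_{ii} = −∑_{k≠i} κ_{ik}`. -/
noncomputable def Ikappa {c : ℕ} (κ : Fin c → Fin c → ℝ) : Matrix (Fin c) (Fin c) ℝ :=
  Matrix.of fun j i => if j = i then -∑ k ∈ Finset.univ.erase i, κ i k else κ i j

/-- `κ` is (the extension by zero of) a family of positive rate coefficients on `R`. -/
def ValidK {c : ℕ} (R : Finset (Fin c × Fin c)) (κ : Fin c → Fin c → ℝ) : Prop :=
  (∀ p ∈ R, 0 < κ p.1 p.2) ∧ ∀ p : Fin c × Fin c, p ∉ R → κ p.1 p.2 = 0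

/-- The monomial map `Θ : ℝ^n_{>0} → ℝ^c`, `Θ(x)_i = ∏_s x_s^{B_{si}}`. -/
noncomputable def Theta {n c : ℕ} (B : Matrix (Fin n) (Fin c) ℕ) (x : Fin n → ℝ) :
    Fin c → ℝ :=
  fun i => ∏ s, x s ^ B s i

/-- The set of positive steady states `E^κ_+` is nonempty. -/
def EposNonempty {n c : ℕ} (B : Matrix (Fin n) (Fin c) ℕ) (κ : Fin c → Fin c → ℝ) : Prop :=
  ∃ x : Fin n → ℝ, (∀ s, 0 < x s) ∧
    (B.map (Nat.cast : ℕ → ℝ)).mulVec ((Ikappa κ).mulVec (Theta B x)) = 0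

/-- The deficiency `δ = dim(ker B ∩ ran I_κ)` equals one. -/
def DeficiencyOneAt {n c : ℕ} (B : Matrix (Fin n) (Fin c) ℕ)
    (κ : Fin c → Fin c → ℝ) : Prop :=
  Module.finrank ℝ
    ↥(LinearMap.ker (Matrix.mulVecLin (B.map (Nat.cast : ℕ → ℝ))) ⊓
      LinearMap.range (Matrix.mulVecLin (Ikappa κ))) = 1

/-- The graph of complexes of the "chain" network: complexes `C_1, …, C_c` are represented
by `0, …, c-1 : Fin c`; the arcs are `(i, i−1)` for `2 ≤ i ≤ c` and `(i, i+1)` for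
`2 ≤ i ≤ c−1` (in the 1-based labelling of the paper). -/
def chainR (c : ℕ) : Finset (Fin c × Fin c) :=
  Finset.univ.filter
    (fun p => 1 ≤ p.1.val ∧ (p.1.val = p.2.val + 1 ∨ p.2.val = p.1.val + 1))


namespace CRN3
variable {c n : ℕ}

noncomputable def tl (v : Fin c → ℝ) (j : ℕ) : ℝ :=
  ∑ i ∈ Finset.univ.filter (fun i : Fin c => j ≤ i.val), v i

lemma tl_zero (v : Fin c → ℝ) : tl v 0 = ∑ i, v i := by
  simp [tl]

lemma tl_of_le (v : Fin c → ℝ) {j : ℕ} (hj : c ≤ j) : tl v j = 0 := by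
  unfold tl
  rw [Finset.filter_false_of_mem, Finset.sum_empty]
  intro i _
  exact fun hji => absurd i.isLt (by omega)

lemma tl_eq_sum_ite (v : Fin c → ℝ) (j : ℕ) :
    tl v j = ∑ i, if j ≤ i.val then v i else 0 := by
  rw [tl, Finset.sum_filter]

lemma tl_succ (v : Fin c → ℝ) {j : ℕ} (hj : j < c) :
    tl v j = v ⟨j, hj⟩ + tl v (j+1) := by
  rw [tl_eq_sum_ite, tl_eq_sum_ite]
  have : ∀ i : Fin c, (if j ≤ i.val then v i else 0)
      = (if i = ⟨j, hj⟩ then v i else 0) + (if j+1 ≤ i.val then v i else 0) := by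
    intro i
    by_cases hij : i = ⟨j, hj⟩
    · subst hij; simp
    · have : i.val ≠ j := fun hv => hij (Fin.ext hv)
      by_cases h1 : j ≤ i.val <;> by_cases h2 : j + 1 ≤ i.val <;>
        simp [hij, h1, h2] <;> omega
  rw [Finset.sum_congr rfl (fun i _ => this i), Finset.sum_add_distrib,
    Finset.sum_ite_eq' Finset.univ]
  simp

lemma tl_smul (t : ℝ) (v : Fin c → ℝ) (j : ℕ) : tl (fun i => t * v i) j = t * tl v j := by
  rw [tl, tl, Finset.mul_sum]

lemma eq_of_tl {v w : Fin c → ℝ} (H : ∀ j, tl v j = tl w j) : v = w := by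
  funext i
  have h1 := tl_succ v i.isLt
  have h2 := tl_succ w i.isLt
  have := H i.val
  have := H (i.val + 1)
  have : v ⟨i.val, i.isLt⟩ = w ⟨i.val, i.isLt⟩ := by linarith
  simpa using this


lemma mem_chainR {p : Fin c × Fin c} :
    p ∈ chainR c ↔ 1 ≤ p.1.val ∧ (p.1.val = p.2.val + 1 ∨ p.2.val = p.1.val + 1) := by
  simp [chainR]

lemma kzero {κ : Fin c → Fin c → ℝ} (hκ : ValidK (chainR c) κ) {i j : Fin c}
    (H : ¬ (1 ≤ i.val ∧ (i.val = j.val + 1 ∨ j.val = i.val + 1))) : κ i j = 0 :=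
  hκ.2 (i, j) (by rwa [mem_chainR])

lemma kpos {κ : Fin c → Fin c → ℝ} (hκ : ValidK (chainR c) κ) {i j : Fin c}
    (H : 1 ≤ i.val ∧ (i.val = j.val + 1 ∨ j.val = i.val + 1)) : 0 < κ i j :=
  hκ.1 (i, j) (by rwa [mem_chainR])

/-- column sums of `Ikappa` vanish, hence `∑ (I_κ v) = 0`. -/
lemma sum_Ik (κ : Fin c → Fin c → ℝ) (v : Fin c → ℝ) :
    ∑ j, (Ikappa κ).mulVec v j = 0 := by
  unfold Matrix.mulVec dotProduct
  rw [Finset.sum_comm]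
  apply Finset.sum_eq_zero
  intro i _
  rw [← Finset.sum_mul]
  have : ∑ j, Ikappa κ j i = 0 := by
    rw [← Finset.add_sum_erase _ _ (Finset.mem_univ i)]
    have h1 : Ikappa κ i i = -∑ k ∈ Finset.univ.erase i, κ i k := by
      simp [Ikappa]
    have h2 : ∀ j ∈ Finset.univ.erase i, Ikappa κ j i = κ i j := by
      intro j hj
      have : j ≠ i := (Finset.mem_erase.mp hj).1
      simp [Ikappa, this]
    rw [h1, Finset.sum_congr rfl h2]
    ring
  rw [this, zero_mul]


lemma tl_Ik {κ : Fin c → Fin c → ℝ} (hκ : ValidK (chainR c) κ) (y : Fin c → ℝ)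
    {j : ℕ} (hj : j + 1 < c) :
    tl ((Ikappa κ).mulVec y) (j+1)
      = κ ⟨j, by omega⟩ ⟨j+1, hj⟩ * y ⟨j, by omega⟩
        - κ ⟨j+1, hj⟩ ⟨j, by omega⟩ * y ⟨j+1, hj⟩ := by
  set fj : Fin c := ⟨j, by omega⟩ with hfj
  set fj1 : Fin c := ⟨j+1, hj⟩ with hfj1
  have hne : fj ≠ fj1 := by simp [hfj, hfj1, Fin.ext_iff]
  set F : Finset (Fin c) := Finset.univ.filter (fun i : Fin c => j+1 ≤ i.val) with hF
  have hmemF : ∀ i : Fin c, i ∈ F ↔ j + 1 ≤ i.val := by intro i; simp [hF]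
  have key : ∀ k : Fin c, (∑ i ∈ F, Ikappa κ i k)
      = (if k = fj then κ fj fj1 else 0) + (if k = fj1 then -(κ fj1 fj) else 0) := by
    intro k
    by_cases hk : j + 1 ≤ k.val
    · -- k ∈ F
      have hkF : k ∈ F := (hmemF k).mpr hk
      have hknej : k ≠ fj := by simp [hfj, Fin.ext_iff]; omega
      rw [← Finset.add_sum_erase _ _ hkF]
      have hdiag : Ikappa κ k k = -∑ l ∈ Finset.univ.erase k, κ k l := by simp [Ikappa]
      have hoff : ∀ i ∈ F.erase k, Ikappa κ i k = κ k i := by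
        intro i hi
        have : i ≠ k := (Finset.mem_erase.mp hi).1
        simp [Ikappa, this]
      rw [hdiag, Finset.sum_congr rfl hoff]
      have hsub : F.erase k ⊆ Finset.univ.erase k :=
        Finset.erase_subset_erase _ (Finset.filter_subset _ _)
      have hsd := (Finset.sum_sdiff (f := fun l => κ k l) hsub).symm
      rw [hsd]
      have hmemsd : ∀ l : Fin c, l ∈ (Finset.univ.erase k) \ (F.erase k) ↔
          l ≠ k ∧ l.val ≤ j := by
        intro l
        rw [Finset.mem_sdiff, Finset.mem_erase, Finset.mem_erase]
        constructor
        · rintro ⟨⟨h1, -⟩, h2⟩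
          push_neg at h2
          refine ⟨h1, ?_⟩
          by_contra hcon
          exact (h2 h1) ((hmemF l).mpr (by omega))
        · rintro ⟨h1, h2⟩
          refine ⟨⟨h1, Finset.mem_univ l⟩, ?_⟩
          rintro ⟨-, h3⟩
          rw [hmemF] at h3
          omega
      have hA : ∑ l ∈ (Finset.univ.erase k) \ (F.erase k), κ k l
          = (if k = fj1 then κ fj1 fj else 0) := by
        by_cases hk1 : k = fj1
        · subst hk1
          rw [if_pos rfl]
          apply Finset.sum_eq_single_of_mem fj
          · exact (hmemsd fj).mpr ⟨hne, by simp [hfj]⟩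
          · intro l hl hlne
            rw [hmemsd] at hl
            apply kzero hκ
            have hlj : l.val ≠ j := by
              intro hval
              exact hlne (Fin.ext (by simp [hfj, hval]))
            simp only [hfj1]
            rintro ⟨-, h | h⟩ <;> omega
        · rw [if_neg hk1]
          apply Finset.sum_eq_zero
          intro l hl
          rw [hmemsd] at hl
          apply kzero hκ
          have hkval : k.val ≠ j + 1 := fun hv => hk1 (Fin.ext (by simp [hfj1, hv]))
          rintro ⟨-, h | h⟩ <;> omega
      rw [hA]
      rw [if_neg hknej]
      by_cases hk1 : k = fj1 <;> simp [hk1] <;> ring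
    · -- k ∉ F
      have hoff2 : ∀ i ∈ F, Ikappa κ i k = κ k i := by
        intro i hi
        rw [hmemF] at hi
        have : i ≠ k := by
          intro hik; subst hik; omega
        simp [Ikappa, this]
      rw [Finset.sum_congr rfl hoff2]
      have hknef1 : k ≠ fj1 := by
        intro hkk; subst hkk; simp [hfj1] at hk
      by_cases hkj : k = fj
      · subst hkj
        rw [if_pos rfl, if_neg hknef1]
        rw [add_zero]
        apply Finset.sum_eq_single_of_mem fj1
        · exact (hmemF fj1).mpr (by simp [hfj1])
        · intro i hi hine
          rw [hmemF] at hi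
          apply kzero hκ
          have hiv : i.val ≠ j + 1 := fun hv => hine (Fin.ext (by simp [hfj1, hv]))
          simp only [hfj]
          rintro ⟨-, h | h⟩ <;> omega
      · rw [if_neg hkj, if_neg hknef1, add_zero]
        apply Finset.sum_eq_zero
        intro i hi
        rw [hmemF] at hi
        apply kzero hκ
        have hkv : k.val ≠ j := fun hv => hkj (Fin.ext (by simp [hfj, hv]))
        rintro ⟨-, h | h⟩ <;> omega
  -- assemble
  show (∑ i ∈ F, (Ikappa κ).mulVec y i) = _
  have : ∀ i, (Ikappa κ).mulVec y i = ∑ k, Ikappa κ i k * y k := by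
    intro i; rfl
  rw [Finset.sum_congr rfl (fun i _ => this i), Finset.sum_comm]
  rw [Finset.sum_congr rfl (fun k _ => by rw [← Finset.sum_mul, key k])]
  rw [Finset.sum_congr rfl (fun k _ => add_mul _ _ (y k)), Finset.sum_add_distrib]
  simp only [ite_mul, zero_mul, Finset.sum_ite_eq' Finset.univ, Finset.mem_univ, if_true]
  ring


/-- indicator of index 0 -/
noncomputable def e0fun : Fin c → ℝ := fun i => if i.val = 0 then 1 else 0

/-- the sum functional -/
noncomputable def sumLin (c : ℕ) : (Fin c → ℝ) →ₗ[ℝ] ℝ where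
  toFun := fun v => ∑ i, v i
  map_add' := by intros; simp [Finset.sum_add_distrib]
  map_smul' := by intros; simp [Finset.mul_sum]

lemma finrank_ker_sumLin (hc : 1 ≤ c) :
    Module.finrank ℝ (LinearMap.ker (sumLin c)) = c - 1 := by
  have hsurj : Function.Surjective (sumLin c) := by
    intro r
    refine ⟨Pi.single ⟨0, by omega⟩ r, ?_⟩
    simp [sumLin]
  have h1 := LinearMap.finrank_range_add_finrank_ker (sumLin c)
  rw [LinearMap.range_eq_top.mpr hsurj] at h1
  simp only [finrank_top, Module.finrank_self] at h1
  have h2 : Module.finrank ℝ (Fin c → ℝ) = c := by simp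
  omega

lemma ker_Ik_le {κ : Fin c → Fin c → ℝ} (hκ : ValidK (chainR c) κ) (hc : 2 ≤ c)
    {v : Fin c → ℝ} (hv : (Ikappa κ).mulVec v = 0) :
    ∀ j : ℕ, (hj : j + 1 < c) → v ⟨j+1, hj⟩ = 0 := by
  intro j
  induction j with
  | zero =>
    intro hj
    have := tl_Ik hκ v hj
    rw [hv] at this
    have htl : tl (0 : Fin c → ℝ) 1 = 0 := by simp [tl]
    rw [htl] at this
    have h01 : κ ⟨0, by omega⟩ ⟨1, hj⟩ = 0 := by
      apply kzero hκ; simp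
    have hpos : 0 < κ ⟨1, hj⟩ ⟨0, by omega⟩ := by
      apply kpos hκ; simp
    rw [h01] at this
    have : κ ⟨1, hj⟩ ⟨0, by omega⟩ * v ⟨1, hj⟩ = 0 := by linarith
    rcases mul_eq_zero.mp this with h | h
    · exact absurd h (ne_of_gt hpos)
    · exact h
  | succ j ih =>
    intro hj
    have hj' : j + 1 < c := by omega
    have := tl_Ik hκ v hj
    rw [hv] at this
    have htl : tl (0 : Fin c → ℝ) (j+2) = 0 := by simp [tl]
    rw [htl, ih hj'] at this
    have hpos : 0 < κ ⟨j+2, hj⟩ ⟨j+1, by omega⟩ := by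
      apply kpos hκ; simp
    have : κ ⟨j+2, hj⟩ ⟨j+1, by omega⟩ * v ⟨j+2, hj⟩ = 0 := by linarith
    rcases mul_eq_zero.mp this with h | h
    · exact absurd h (ne_of_gt hpos)
    · exact h

lemma range_Ik {κ : Fin c → Fin c → ℝ} (hκ : ValidK (chainR c) κ) (hc : 2 ≤ c) :
    LinearMap.range (Matrix.mulVecLin (Ikappa κ)) = LinearMap.ker (sumLin c) := by
  have hle : LinearMap.range (Matrix.mulVecLin (Ikappa κ)) ≤ LinearMap.ker (sumLin c) := by
    rintro w ⟨v, rfl⟩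
    simp only [LinearMap.mem_ker, sumLin, LinearMap.coe_mk, AddHom.coe_mk]
    exact sum_Ik κ v
  apply Submodule.eq_of_le_of_finrank_le hle
  rw [finrank_ker_sumLin (by omega)]
  -- finrank range ≥ c - 1
  have hkerle : LinearMap.ker (Matrix.mulVecLin (Ikappa κ))
      ≤ Submodule.span ℝ {(e0fun : Fin c → ℝ)} := by
    intro v hv
    rw [LinearMap.mem_ker, Matrix.mulVecLin_apply] at hv
    have hz := ker_Ik_le hκ hc hv
    have : v = v ⟨0, by omega⟩ • (e0fun : Fin c → ℝ) := by
      funext i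
      rcases Nat.eq_zero_or_pos i.val with h0 | h0
      · have hi0 : i = ⟨0, by omega⟩ := Fin.ext h0
        rw [hi0]
        simp [e0fun]
      · have hi1 : (i.val - 1) + 1 < c := by omega
        have hvz := hz (i.val - 1) hi1
        have hieq : i = ⟨(i.val - 1) + 1, hi1⟩ := by
          apply Fin.ext; show i.val = (i.val - 1) + 1; omega
        rw [hieq, hvz]
        simp [e0fun]
    rw [this]
    exact Submodule.smul_mem _ _ (Submodule.mem_span_singleton_self _)
  have hk1 : Module.finrank ℝ (LinearMap.ker (Matrix.mulVecLin (Ikappa κ))) ≤ 1 := by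
    have := Submodule.finrank_mono hkerle
    have hs : Module.finrank ℝ (Submodule.span ℝ {(e0fun : Fin c → ℝ)}) = 1 := by
      apply finrank_span_singleton
      intro hcon
      have := congrFun hcon ⟨0, by omega⟩
      simp [e0fun] at this
    omega
  have h1 := LinearMap.finrank_range_add_finrank_ker (Matrix.mulVecLin (Ikappa κ))
  have h2 : Module.finrank ℝ (Fin c → ℝ) = c := by simp
  omega


lemma span_inter {B : Matrix (Fin n) (Fin c) ℕ} {κ : Fin c → Fin c → ℝ}
    (hdef1 : DeficiencyOneAt B κ) {h : Fin c → ℝ} (hh0 : h ≠ 0)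
    (hker : (B.map (Nat.cast : ℕ → ℝ)).mulVec h = 0)
    (hsome : ∃ v : Fin c → ℝ, (Ikappa κ).mulVec v = h) :
    (LinearMap.ker (Matrix.mulVecLin (B.map (Nat.cast : ℕ → ℝ))) ⊓
      LinearMap.range (Matrix.mulVecLin (Ikappa κ))) = Submodule.span ℝ {h} := by
  set W := LinearMap.ker (Matrix.mulVecLin (B.map (Nat.cast : ℕ → ℝ))) ⊓
      LinearMap.range (Matrix.mulVecLin (Ikappa κ)) with hW
  have hhW : h ∈ W := by
    rw [hW, Submodule.mem_inf]
    constructor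
    · rw [LinearMap.mem_ker, Matrix.mulVecLin_apply]; exact hker
    · obtain ⟨v, hv⟩ := hsome
      exact ⟨v, by rw [Matrix.mulVecLin_apply, hv]⟩
  have hle : Submodule.span ℝ {h} ≤ W := by
    rw [Submodule.span_singleton_le_iff_mem]; exact hhW
  symm
  apply Submodule.eq_of_le_of_finrank_le hle
  rw [hdef1, finrank_span_singleton hh0]

lemma steady_scalar {B : Matrix (Fin n) (Fin c) ℕ} {κ : Fin c → Fin c → ℝ}
    (hdef1 : DeficiencyOneAt B κ) {h : Fin c → ℝ} (hh0 : h ≠ 0)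
    (hker : (B.map (Nat.cast : ℕ → ℝ)).mulVec h = 0)
    (hsome : ∃ v : Fin c → ℝ, (Ikappa κ).mulVec v = h)
    {y : Fin c → ℝ}
    (hsteady : (B.map (Nat.cast : ℕ → ℝ)).mulVec ((Ikappa κ).mulVec y) = 0) :
    ∃ lam : ℝ, (Ikappa κ).mulVec y = lam • h := by
  have hmem : (Ikappa κ).mulVec y ∈
      (LinearMap.ker (Matrix.mulVecLin (B.map (Nat.cast : ℕ → ℝ))) ⊓
        LinearMap.range (Matrix.mulVecLin (Ikappa κ))) := by
    rw [Submodule.mem_inf]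
    constructor
    · rw [LinearMap.mem_ker, Matrix.mulVecLin_apply]; exact hsteady
    · exact ⟨y, by rw [Matrix.mulVecLin_apply]⟩
  rw [span_inter hdef1 hh0 hker hsome, Submodule.mem_span_singleton] at hmem
  obtain ⟨a, ha⟩ := hmem
  exact ⟨a, ha.symm⟩

lemma theta_pos {B : Matrix (Fin n) (Fin c) ℕ} {x : Fin n → ℝ} (hx : ∀ s, 0 < x s)
    (i : Fin c) : 0 < Theta B x i :=
  Finset.prod_pos fun s _ => pow_pos (hx s) _

/-- For any valid `κ` and positive steady state there is `lam` with `I_κ y = lam • h`,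
and `lam * tl h 1 < 0`. -/
lemma lam_neg {B : Matrix (Fin n) (Fin c) ℕ} {κ : Fin c → Fin c → ℝ}
    (hc : 2 ≤ c) (hκ : ValidK (chainR c) κ)
    (hdef1 : DeficiencyOneAt B κ) {h : Fin c → ℝ} (hh0 : h ≠ 0)
    (hker : (B.map (Nat.cast : ℕ → ℝ)).mulVec h = 0)
    (hsome : ∃ v : Fin c → ℝ, (Ikappa κ).mulVec v = h)
    {y : Fin c → ℝ} (hy : ∀ i, 0 < y i)
    (hsteady : (B.map (Nat.cast : ℕ → ℝ)).mulVec ((Ikappa κ).mulVec y) = 0) :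
    ∃ lam : ℝ, (Ikappa κ).mulVec y = lam • h ∧
      lam * tl h 1 = - (κ ⟨1, by omega⟩ ⟨0, by omega⟩ * y ⟨1, by omega⟩) ∧
      lam * tl h 1 < 0 := by
  obtain ⟨lam, hlam⟩ := steady_scalar hdef1 hh0 hker hsome hsteady
  have h1c : (0:ℕ) + 1 < c := by omega
  have htail := tl_Ik hκ y h1c
  rw [hlam] at htail
  have hsm : tl (lam • h) (0+1) = lam * tl h 1 := by
    have : (lam • h) = fun i => lam * h i := by funext i; simp
    rw [this, tl_smul]
  rw [hsm] at htail
  have hk01 : κ ⟨0, by omega⟩ ⟨0+1, h1c⟩ = 0 := by apply kzero hκ; simp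
  have hk10 : 0 < κ ⟨0+1, h1c⟩ ⟨0, by omega⟩ := by apply kpos hκ; simp
  rw [hk01, zero_mul] at htail
  refine ⟨lam, hlam, by simpa using htail, ?_⟩
  rw [htail]
  simp only [zero_sub, neg_neg, neg_lt, neg_zero]
  exact mul_pos hk10 (hy _)

/-- the all-ones rate choice -/
noncomputable def kOne (c : ℕ) : Fin c → Fin c → ℝ :=
  fun i j => if (i, j) ∈ chainR c then 1 else 0

lemma kOne_valid : ValidK (chainR c) (kOne c) := by
  constructor
  · intro p hp
    simp only [kOne]
    rw [if_pos hp]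
    norm_num
  · intro p hp
    simp only [kOne]
    rw [if_neg hp]

/-- the `ε`-perturbed rate choice: backward rates 1, forward rates ε -/
noncomputable def kEps (c : ℕ) (ε : ℝ) : Fin c → Fin c → ℝ :=
  fun i j => if (i, j) ∈ chainR c then (if i.val = j.val + 1 then 1 else ε) else 0

lemma kEps_valid {ε : ℝ} (hε : 0 < ε) : ValidK (chainR c) (kEps c ε) := by
  constructor
  · intro p hp
    simp only [kEps]
    rw [if_pos hp]
    split <;> norm_num
    exact hε
  · intro p hp
    simp only [kEps]
    rw [if_neg hp]

/-- the recursive sequence for necessity -/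
noncomputable def useq (ε : ℝ) (g : ℕ → ℝ) : ℕ → ℝ
  | 0 => 0
  | 1 => - g 1
  | (m+2) => ε * useq ε g (m+1) - g (m+2)


lemma useq_bound {ε M : ℝ} {g : ℕ → ℝ} (hε0 : 0 ≤ ε) (hεM : ε * M ≤ 1) (hM : 1 ≤ M)
    {N : ℕ} (hg : ∀ m, m ≤ N → |g m| ≤ M - 1) :
    ∀ m, 1 ≤ m → m ≤ N → |useq ε g m| ≤ M := by
  intro m
  induction m with
  | zero => omega
  | succ m ih =>
    intro h1 hmN
    cases m with
    | zero =>
      show |useq ε g 1| ≤ M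
      rw [show useq ε g 1 = - g 1 from rfl, abs_neg]
      have := hg 1 hmN
      linarith
    | succ m' =>
      have ihm := ih (by omega) (by omega)
      show |useq ε g (m'+2)| ≤ M
      rw [show useq ε g (m'+2) = ε * useq ε g (m'+1) - g (m'+2) from rfl]
      have h1 : |ε * useq ε g (m'+1) - g (m'+2)|
          ≤ |ε * useq ε g (m'+1)| + |g (m'+2)| := by
        rw [sub_eq_add_neg]
        exact (abs_add_le _ _).trans (by rw [abs_neg])
      have h2 : |ε * useq ε g (m'+1)| = ε * |useq ε g (m'+1)| := by
        rw [abs_mul, abs_of_nonneg hε0]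
      have h3 : ε * |useq ε g (m'+1)| ≤ ε * M :=
        mul_le_mul_of_nonneg_left ihm hε0
      have h4 := hg (m'+2) hmN
      linarith

lemma necessity {B : Matrix (Fin n) (Fin c) ℕ} (hc : 2 ≤ c)
    (hdef : ∀ κ : Fin c → Fin c → ℝ, ValidK (chainR c) κ → DeficiencyOneAt B κ)
    {h : Fin c → ℝ} (hh0 : h ≠ 0)
    (hker : (B.map (Nat.cast : ℕ → ℝ)).mulVec h = 0)
    (hran : ∀ κ : Fin c → Fin c → ℝ, ValidK (chainR c) κ →
      ∃ v : Fin c → ℝ, (Ikappa κ).mulVec v = h)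
    (hCpp : tl h 1 ≤ 0)
    (LHS : ∀ κ : Fin c → Fin c → ℝ, ValidK (chainR c) κ → EposNonempty B κ) :
    tl h 1 < 0 ∧ ∀ j : Fin c, 2 ≤ j.val → tl h j.val ≤ 0 := by
  have hH : tl h 1 < 0 := by
    obtain ⟨x, hx, hst⟩ := LHS (kOne c) kOne_valid
    obtain ⟨lam, -, -, hneg⟩ := lam_neg hc kOne_valid (hdef _ kOne_valid) hh0 hker
      (hran _ kOne_valid) (theta_pos hx) hst
    rcases lt_or_eq_of_le hCpp with hlt | heq
    · exact hlt
    · rw [heq, mul_zero] at hneg; exact absurd hneg (lt_irrefl 0)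
  refine ⟨hH, ?_⟩
  intro j0 hj0
  by_contra hS
  push_neg at hS
  set S := tl h j0.val with hSdef
  set M : ℝ := 1 + ∑ j ∈ Finset.range c, |tl h j| with hMdef
  have hsum_nonneg : (0:ℝ) ≤ ∑ j ∈ Finset.range c, |tl h j| :=
    Finset.sum_nonneg fun _ _ => abs_nonneg _
  have hM1 : 1 ≤ M := by rw [hMdef]; linarith
  have hM0 : 0 < M := by linarith
  have hgM : ∀ m, m ≤ c - 1 → |tl h m| ≤ M - 1 := by
    intro m hm
    have hmc : m < c := by omega
    have := Finset.single_le_sum (f := fun j => |tl h j|)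
      (fun i _ => abs_nonneg _) (Finset.mem_range.mpr hmc)
    rw [hMdef]; linarith
  set ε := min (1/M) (S/(2*M)) with hεdef
  have hε0 : 0 < ε := lt_min (by positivity) (by positivity)
  have hεM : ε * M ≤ 1 := by
    have : ε ≤ 1/M := min_le_left _ _
    calc ε * M ≤ (1/M) * M := mul_le_mul_of_nonneg_right this (le_of_lt hM0)
    _ = 1 := by field_simp
  have hεS : ε * M ≤ S/2 := by
    have : ε ≤ S/(2*M) := min_le_right _ _
    calc ε * M ≤ (S/(2*M)) * M := mul_le_mul_of_nonneg_right this (le_of_lt hM0)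
    _ = S/2 := by field_simp
  have hval := kEps_valid (c := c) hε0
  obtain ⟨x, hx, hst⟩ := LHS (kEps c ε) hval
  obtain ⟨lam, hlam, heq1, hneg⟩ := lam_neg hc hval (hdef _ hval) hh0 hker
    (hran _ hval) (theta_pos hx) hst
  have hlampos : 0 < lam := by nlinarith
  -- the link between the steady state and the recursion
  have hlink : ∀ m, (hm : m + 1 < c) →
      Theta B x ⟨m+1, hm⟩ = lam * useq ε (fun j => tl h j) (m+1) := by
    intro m
    induction m with
    | zero =>
      intro hm
      have hκ10 : kEps c ε ⟨0+1, hm⟩ ⟨0, by omega⟩ = 1 := by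
        simp [kEps, chainR]
      rw [hκ10, one_mul] at heq1
      rw [show useq ε (fun j => tl h j) 1 = - tl h 1 from rfl]
      linarith
    | succ m ih =>
      intro hm
      have hm' : m + 1 < c := by omega
      have htail := tl_Ik hval (Theta B x) hm
      rw [hlam] at htail
      have hsm : tl (lam • h) (m+1+1) = lam * tl h (m+2) := by
        have : (lam • h) = fun i => lam * h i := by funext i; simp
        rw [this, tl_smul]
      rw [hsm] at htail
      have hκf : kEps c ε ⟨m+1, by omega⟩ ⟨m+1+1, hm⟩ = ε := by
        simp [kEps, chainR]
      have hκb : kEps c ε ⟨m+1+1, hm⟩ ⟨m+1, by omega⟩ = 1 := by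
        simp [kEps, chainR]
      rw [hκf, hκb, one_mul] at htail
      rw [ih hm'] at htail
      rw [show useq ε (fun j => tl h j) (m+2) = ε * useq ε (fun j => tl h j) (m+1)
        - tl h (m+2) from rfl]
      linarith [htail]
  -- bound on the recursion
  have hbound := useq_bound (g := fun j => tl h j) (le_of_lt hε0) hεM hM1 (N := c - 1) hgM
  -- contradiction at j0
  have hj0c : j0.val < c := j0.isLt
  have hm1 : (j0.val - 1) + 1 < c := by omega
  have hylink := hlink (j0.val - 1) hm1
  have hj0eq : (⟨(j0.val - 1) + 1, hm1⟩ : Fin c) = j0 := by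
    apply Fin.ext; show (j0.val - 1) + 1 = j0.val; omega
  rw [hj0eq] at hylink
  have hypos : 0 < Theta B x j0 := theta_pos hx j0
  have huval : useq ε (fun j => tl h j) (j0.val - 1 + 1)
      = ε * useq ε (fun j => tl h j) (j0.val - 1) - tl h (j0.val - 1 + 1) := by
    have h2 : j0.val - 1 + 1 = (j0.val - 2) + 2 := by omega
    rw [h2]
    rw [show useq ε (fun j => tl h j) ((j0.val - 2)+2)
      = ε * useq ε (fun j => tl h j) ((j0.val-2)+1) - tl h ((j0.val-2)+2) from rfl]
    have h3 : j0.val - 2 + 1 = j0.val - 1 := by omega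
    rw [h3]
  have habs : |useq ε (fun j => tl h j) (j0.val - 1)| ≤ M :=
    hbound _ (by omega) (by omega)
  have hupos : 0 < useq ε (fun j => tl h j) (j0.val - 1 + 1) := by
    have := hylink
    nlinarith
  have hle : useq ε (fun j => tl h j) (j0.val - 1 + 1) ≤ ε * M - S := by
    rw [huval]
    have h4 : j0.val - 1 + 1 = j0.val := by omega
    rw [h4]
    have : ε * useq ε (fun j => tl h j) (j0.val - 1) ≤ ε * M := by
      apply mul_le_mul_of_nonneg_left _ (le_of_lt hε0)
      calc useq ε (fun j => tl h j) (j0.val - 1) ≤ |useq ε (fun j => tl h j) (j0.val-1)| :=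
        le_abs_self _
      _ ≤ M := habs
    linarith
  nlinarith


noncomputable def w1fun : Fin c → ℝ := fun i => if i.val = 0 then 0 else 1

noncomputable def kext {c : ℕ} (κ : Fin c → Fin c → ℝ) (a b : ℕ) : ℝ :=
  if h : a < c ∧ b < c then κ ⟨a, h.1⟩ ⟨b, h.2⟩ else 0

lemma kext_eq {κ : Fin c → Fin c → ℝ} {a b : ℕ} (ha : a < c) (hb : b < c) :
    kext κ a b = κ ⟨a, ha⟩ ⟨b, hb⟩ := dif_pos ⟨ha, hb⟩

noncomputable def wseq (κ' : ℕ → ℕ → ℝ) (g : ℕ → ℝ) : ℕ → ℝ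
  | 0 => 0
  | 1 => (- g 1) / κ' 1 0
  | (m+2) => (κ' (m+1) (m+2) * wseq κ' g (m+1) - g (m+2)) / κ' (m+2) (m+1)

lemma wseq_pos {κ : Fin c → Fin c → ℝ} (hκ : ValidK (chainR c) κ) {h : Fin c → ℝ}
    (hH : tl h 1 < 0) (hS : ∀ j : Fin c, 2 ≤ j.val → tl h j.val ≤ 0) :
    ∀ m, (hm : m + 1 < c) → 0 < wseq (kext κ) (fun j => tl h j) (m+1) := by
  intro m
  induction m with
  | zero =>
    intro hm
    show 0 < (- tl h 1) / kext κ 1 0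
    rw [kext_eq hm (by omega)]
    apply div_pos (by linarith)
    exact kpos hκ (by simp)
  | succ m ih =>
    intro hm
    have hm' : m + 1 < c := by omega
    show 0 < (kext κ (m+1) (m+2) * wseq (kext κ) (fun j => tl h j) (m+1) - tl h (m+2))
      / kext κ (m+2) (m+1)
    rw [kext_eq hm' hm, kext_eq hm hm']
    apply div_pos _ (kpos hκ (by simp))
    have hf : 0 < κ ⟨m+1, hm'⟩ ⟨m+2, hm⟩ := kpos hκ (by simp)
    have hw := ih hm'
    have hg : tl h (m+2) ≤ 0 := hS ⟨m+2, hm⟩ (by simp)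
    nlinarith

/-- the key solvability fact coming from deficiency one -/
lemma mem_V {B : Matrix (Fin n) (Fin c) ℕ} {κ : Fin c → Fin c → ℝ}
    (hc : 2 ≤ c) (hκ : ValidK (chainR c) κ) (hdef1 : DeficiencyOneAt B κ)
    {h : Fin c → ℝ} (hh0 : h ≠ 0)
    (hker : (B.map (Nat.cast : ℕ → ℝ)).mulVec h = 0)
    (hsome : ∃ v : Fin c → ℝ, (Ikappa κ).mulVec v = h)
    (hH0 : h ⟨0, by omega⟩ ≠ 0) (p : Fin c → ℝ) :
    p ∈ (LinearMap.range (Matrix.mulVecLin (B.map (Nat.cast : ℕ → ℝ)).transpose)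
      ⊔ Submodule.span ℝ {(e0fun : Fin c → ℝ)}) ⊔ Submodule.span ℝ {(w1fun : Fin c → ℝ)} := by
  by_contra hnm
  obtain ⟨φ, hφp, hφmap⟩ := Submodule.exists_dual_map_eq_bot_of_notMem hnm inferInstance
  set V := (LinearMap.range (Matrix.mulVecLin (B.map (Nat.cast : ℕ → ℝ)).transpose)
      ⊔ Submodule.span ℝ {(e0fun : Fin c → ℝ)}) ⊔ Submodule.span ℝ {(w1fun : Fin c → ℝ)}
      with hV
  have hvan : ∀ v ∈ V, φ v = 0 := by
    intro v hv
    have hmem : φ v ∈ V.map φ := Submodule.mem_map_of_mem hv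
    rw [hφmap] at hmem
    simpa using hmem
  set z₀ : Fin c → ℝ := fun i => φ (fun j => if i = j then 1 else 0) with hz
  have hφex : ∀ q : Fin c → ℝ, φ q = ∑ i, q i * z₀ i := by
    intro q
    conv_lhs => rw [pi_eq_sum_univ q, map_sum]
    apply Finset.sum_congr rfl
    intro i _
    rw [map_smul, smul_eq_mul]
  have hz00 : z₀ ⟨0, by omega⟩ = 0 := by
    have he : (fun j : Fin c => if (⟨0, by omega⟩ : Fin c) = j then (1:ℝ) else 0) = e0fun := by
      funext j
      simp [e0fun, Fin.ext_iff, eq_comm]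
    rw [hz]
    show φ _ = 0
    rw [he]
    exact hvan _ (Submodule.mem_sup_left
      (Submodule.mem_sup_right (Submodule.mem_span_singleton_self _)))
  have htlz : tl z₀ 1 = 0 := by
    have hw1 : φ w1fun = 0 :=
      hvan _ (Submodule.mem_sup_right (Submodule.mem_span_singleton_self _))
    rw [hφex] at hw1
    have hcongr : ∑ i, w1fun i * z₀ i = tl z₀ 1 := by
      rw [tl_eq_sum_ite]
      apply Finset.sum_congr rfl
      intro i _
      by_cases h0 : i.val = 0
      · simp [w1fun, h0]
      · simp [w1fun, h0, Nat.one_le_iff_ne_zero]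
    rw [← hcongr]
    exact hw1
  have hBz : (B.map (Nat.cast : ℕ → ℝ)).mulVec z₀ = 0 := by
    funext s
    have hcolmem : (fun i : Fin c => (B.map (Nat.cast : ℕ → ℝ)) s i) ∈ V := by
      apply Submodule.mem_sup_left
      apply Submodule.mem_sup_left
      refine ⟨fun j => if s = j then 1 else 0, ?_⟩
      funext i
      simp [Matrix.mulVecLin_apply, Matrix.mulVec, dotProduct,
        Matrix.transpose_apply, mul_ite, mul_one, mul_zero, Finset.sum_ite_eq,
        Matrix.vecMul, ite_mul, one_mul, zero_mul, Matrix.map_apply]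
    have := hvan _ hcolmem
    rw [hφex] at this
    show (B.map (Nat.cast : ℕ → ℝ)).mulVec z₀ s = 0
    rw [show (B.map (Nat.cast : ℕ → ℝ)).mulVec z₀ s
      = ∑ i, (B.map (Nat.cast : ℕ → ℝ)) s i * z₀ i from rfl]
    exact this
  have hzmem : z₀ ∈ (LinearMap.ker (Matrix.mulVecLin (B.map (Nat.cast : ℕ → ℝ))) ⊓
      LinearMap.range (Matrix.mulVecLin (Ikappa κ))) := by
    rw [Submodule.mem_inf]
    constructor
    · rw [LinearMap.mem_ker, Matrix.mulVecLin_apply]; exact hBz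
    · rw [range_Ik hκ hc]
      rw [LinearMap.mem_ker]
      show ∑ i, z₀ i = 0
      rw [← tl_zero, tl_succ z₀ (show 0 < c by omega), htlz, add_zero, hz00]
  rw [span_inter hdef1 hh0 hker hsome, Submodule.mem_span_singleton] at hzmem
  obtain ⟨a, ha⟩ := hzmem
  have ha0 : a = 0 := by
    have := congrFun ha ⟨0, by omega⟩
    rw [Pi.smul_apply, smul_eq_mul] at this
    rw [hz00] at this
    rcases mul_eq_zero.mp this with h' | h'
    · exact h'
    · exact absurd h' hH0
  have hz0 : z₀ = 0 := by rw [← ha, ha0, zero_smul]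
  apply hφp
  rw [hφex, hz0]
  simp


lemma sufficiency {B : Matrix (Fin n) (Fin c) ℕ} (hc : 2 ≤ c)
    (hdef : ∀ κ : Fin c → Fin c → ℝ, ValidK (chainR c) κ → DeficiencyOneAt B κ)
    {h : Fin c → ℝ} (hh0 : h ≠ 0)
    (hker : (B.map (Nat.cast : ℕ → ℝ)).mulVec h = 0)
    (hran : ∀ κ : Fin c → Fin c → ℝ, ValidK (chainR c) κ →
      ∃ v : Fin c → ℝ, (Ikappa κ).mulVec v = h)
    (hH : tl h 1 < 0) (hS : ∀ j : Fin c, 2 ≤ j.val → tl h j.val ≤ 0) :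
    ∀ κ : Fin c → Fin c → ℝ, ValidK (chainR c) κ → EposNonempty B κ := by
  intro κ hκ
  -- total sum of h vanishes
  have hsum : ∑ i, h i = 0 := by
    obtain ⟨v0, hv0⟩ := hran κ hκ
    rw [← hv0]; exact sum_Ik κ v0
  have h0pos : 0 < h ⟨0, by omega⟩ := by
    have h1 := tl_succ h (show 0 < c by omega)
    rw [tl_zero] at h1
    rw [hsum] at h1
    linarith
  set g : ℕ → ℝ := fun j => tl h j with hg
  set w : ℕ → ℝ := wseq (kext κ) g with hwdef
  have hwpos : ∀ m, (hm : m + 1 < c) → 0 < w (m+1) := wseq_pos hκ hH hS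
  -- the vector p of logarithms
  set p : Fin c → ℝ := fun i => if i.val = 0 then 0 else Real.log (w i.val) with hp
  have hpV := mem_V hc hκ (hdef κ hκ) hh0 hker (hran κ hκ) (ne_of_gt h0pos) p
  rw [Submodule.mem_sup] at hpV
  obtain ⟨q, hq, r, hr, hqr⟩ := hpV
  rw [Submodule.mem_sup] at hq
  obtain ⟨q1, hq1, q2, hq2, hq12⟩ := hq
  obtain ⟨z, hz⟩ := hq1
  rw [Submodule.mem_span_singleton] at hq2 hr
  obtain ⟨α, hα⟩ := hq2
  obtain ⟨β, hβ⟩ := hr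
  -- the candidate steady state
  set x : Fin n → ℝ := fun s => Real.exp (z s) with hx
  have hxpos : ∀ s, 0 < x s := fun s => Real.exp_pos _
  set lam : ℝ := Real.exp (-β) with hlam
  have hlampos : 0 < lam := Real.exp_pos _
  -- value of Theta
  have hq1val : ∀ i : Fin c, q1 i = p i - α * e0fun i - β * w1fun i := by
    intro i
    have := congrFun hqr i
    rw [← hq12] at this
    have h2 := congrFun hα i
    have h3 := congrFun hβ i
    simp only [Pi.add_apply, Pi.smul_apply, smul_eq_mul] at this h2 h3
    rw [← h2, ← h3] at this
    linarith
  have hTheta : ∀ i : Fin c, Theta B x i = Real.exp (q1 i) := by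
    intro i
    rw [← hz]
    have hmv : (Matrix.mulVecLin (B.map (Nat.cast : ℕ → ℝ)).transpose) z i
        = ∑ s, ((B s i : ℝ)) * z s := by
      simp [Matrix.mulVecLin_apply, Matrix.mulVec, Matrix.vecMul, dotProduct,
        Matrix.transpose_apply, Matrix.map_apply, mul_comm]
    rw [hmv, Real.exp_sum]
    unfold Theta
    apply Finset.prod_congr rfl
    intro s _
    rw [hx]
    rw [← Real.exp_nat_mul]
  have hTheta0 : ∀ (hm : (0:ℕ) < c), Theta B x ⟨0, hm⟩ = Real.exp (-α) := by
    intro hm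
    rw [hTheta, hq1val]
    simp [hp, e0fun, w1fun]
  have hThetaS : ∀ m, (hm : m + 1 < c) → Theta B x ⟨m+1, hm⟩ = lam * w (m+1) := by
    intro m hm
    rw [hTheta, hq1val]
    have h1 : e0fun (⟨m+1, hm⟩ : Fin c) = 0 := by simp [e0fun]
    have h2 : w1fun (⟨m+1, hm⟩ : Fin c) = 1 := by simp [w1fun]
    have h3 : p ⟨m+1, hm⟩ = Real.log (w (m+1)) := by simp [hp]
    rw [h1, h2, h3, mul_zero, mul_one, sub_zero, sub_eq_add_neg, Real.exp_add,
      Real.exp_log (hwpos m hm), hlam]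
    ring
  -- the main steady state identity
  have hmain : (Ikappa κ).mulVec (Theta B x) = lam • h := by
    apply eq_of_tl
    intro j
    have hsmul : ∀ j', tl (lam • h) j' = lam * tl h j' := by
      intro j'
      have : (lam • h) = fun i => lam * h i := by funext i; simp
      rw [this, tl_smul]
    rcases Nat.lt_or_ge j c with hjc | hjc
    · cases j with
      | zero =>
        rw [tl_zero, sum_Ik, hsmul, tl_zero, hsum, mul_zero]
      | succ m =>
        rw [tl_Ik hκ (Theta B x) hjc, hsmul]
        rw [hThetaS m hjc]
        cases m with
        | zero =>
          have hκ01 : κ ⟨0, by omega⟩ ⟨0+1, hjc⟩ = 0 := kzero hκ (by simp)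
          have hκ10 : 0 < κ ⟨0+1, hjc⟩ ⟨0, by omega⟩ := kpos hκ (by simp)
          have hw1v : w 1 = (- g 1) / kext κ 1 0 := rfl
          rw [hκ01, zero_mul, hw1v, kext_eq hjc (by omega)]
          field_simp
          simp [hg]
        | succ m' =>
          have hm' : m' + 1 < c := by omega
          rw [hThetaS m' hm']
          have hwv : w (m'+2) = (kext κ (m'+1) (m'+2) * w (m'+1) - g (m'+2))
              / kext κ (m'+2) (m'+1) := rfl
          have hκb : 0 < κ ⟨m'+2, hjc⟩ ⟨m'+1, hm'⟩ := kpos hκ (by simp)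
          rw [hwv, kext_eq hm' hjc, kext_eq hjc hm']
          field_simp
          ring
    · rw [tl_of_le _ hjc, hsmul, tl_of_le _ hjc, mul_zero]
  refine ⟨x, hxpos, ?_⟩
  rw [hmain, Matrix.mulVec_smul, hker, smul_zero]


end CRN3

theorem stmt3 {n c : ℕ} (hc : 2 ≤ c)
    (B : Matrix (Fin n) (Fin c) ℕ)
    (hdef : ∀ κ : Fin c → Fin c → ℝ, ValidK (chainR c) κ → DeficiencyOneAt B κ)
    (h : Fin c → ℝ) (hh0 : h ≠ 0)
    (hker : (B.map (Nat.cast : ℕ → ℝ)).mulVec h = 0)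
    (hran : ∀ κ : Fin c → Fin c → ℝ, ValidK (chainR c) κ →
      ∃ v : Fin c → ℝ, (Ikappa κ).mulVec v = h)
    (hCpp : ∑ i ∈ Finset.univ.filter (fun i : Fin c => 1 ≤ i.val), h i ≤ 0) :
    (∀ κ : Fin c → Fin c → ℝ, ValidK (chainR c) κ → EposNonempty B κ) ↔
      (∑ i ∈ Finset.univ.filter (fun i : Fin c => 1 ≤ i.val), h i < 0 ∧
        ∀ j : Fin c, 2 ≤ j.val →
          ∑ i ∈ Finset.univ.filter (fun i : Fin c => j.val ≤ i.val), h i ≤ 0) := by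
  constructor
  · intro LHS
    exact CRN3.necessity hc hdef hh0 hker hran hCpp LHS
  · rintro ⟨h1, h2⟩
    exact CRN3.sufficiency hc hdef hh0 hker hran h1 h2
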